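/- arXiv:1602.03435 — 5 statements merged into one kernel-verified Lean document; each statement's English description precedes it below -/
import Mathlib

section
/- Let X ⊆ ℕ be a finite set with 0 ∈ X. Then the star graph K_{1, 2^{|X|}−2} admits a TIASSL with respect to X: labeling the center by {0} and the leaves bijectively by the remaining nonempty subsets of X gives f(V) = P(X)\{∅}, f⁺(E) = P(X)\{∅,{0}}, and f(V) ∪ f⁺(E) = P(X)\{∅}. -/
open Pointwise

/-- A collection `T` of subsets of a finite set `X ⊆ ℕ` is a topology on `X`. -/
def IsTopologyOn (T : Set (Finset ℕ)) (X : Finset ℕ) : Prop :=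
  ∅ ∈ T ∧ X ∈ T ∧ (∀ A ∈ T, A ⊆ X) ∧
    (∀ A ∈ T, ∀ B ∈ T, A ∪ B ∈ T) ∧ (∀ A ∈ T, ∀ B ∈ T, A ∩ B ∈ T)

/-- The star `K_{1, 2^{|X|}-2}` admits a TIASSL with respect to `X`: the center is
labeled `{0}` and the leaves get the remaining nonempty subsets of `X` bijectively. -/
theorem star_admits_tiassl (X : Finset ℕ) (h0 : (0 : ℕ) ∈ X) (hcard : 2 ≤ X.card) :
    ∃ f : (Fin 1 ⊕ Fin (2 ^ X.card - 2)) → Finset ℕ,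
      Function.Injective f ∧
      f (Sum.inl 0) = {0} ∧
      Set.range f = {A : Finset ℕ | A ⊆ X ∧ A.Nonempty} ∧
      (∀ u v, (completeBipartiteGraph (Fin 1) (Fin (2 ^ X.card - 2))).Adj u v →
        f u + f v ⊆ X) ∧
      IsTopologyOn (Set.range f ∪ {∅}) X ∧
      {A : Finset ℕ | ∃ u v,
          (completeBipartiteGraph (Fin 1) (Fin (2 ^ X.card - 2))).Adj u v ∧ A = f u + f v}
        = {A : Finset ℕ | A ⊆ X ∧ A.Nonempty ∧ A ≠ {0}} ∧
      Set.range f ∪ {A : Finset ℕ | ∃ u v,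
          (completeBipartiteGraph (Fin 1) (Fin (2 ^ X.card - 2))).Adj u v ∧ A = f u + f v}
        = {A : Finset ℕ | A ⊆ X ∧ A.Nonempty} := by
  classical
  set T : Finset (Finset ℕ) := X.powerset \ {∅, {0}} with hT
  have hmemT : ∀ A : Finset ℕ, A ∈ T ↔ A ⊆ X ∧ A ≠ ∅ ∧ A ≠ {0} := by
    intro A
    simp [hT, Finset.mem_sdiff, Finset.mem_powerset, and_assoc]
  have hsub : ({∅, {0}} : Finset (Finset ℕ)) ⊆ X.powerset := by
    intro A hA
    simp only [Finset.mem_insert, Finset.mem_singleton] at hA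
    rcases hA with rfl | rfl <;> simp [Finset.singleton_subset_iff, h0]
  have hTcard : T.card = 2 ^ X.card - 2 := by
    rw [hT, Finset.card_sdiff_of_subset hsub, Finset.card_powerset,
      Finset.card_insert_of_notMem (by simp only [Finset.mem_singleton]; exact fun h => Finset.singleton_ne_empty 0 h.symm), Finset.card_singleton]
  have e : Fin (2 ^ X.card - 2) ≃ T := (finCongr hTcard.symm).trans T.equivFin.symm
  have hz : ∀ B : Finset ℕ, ({0} : Finset ℕ) + B = B := by
    intro B; simp [Finset.singleton_add]
  have hz' : ∀ B : Finset ℕ, B + ({0} : Finset ℕ) = B := by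
    intro B; simp [Finset.add_singleton]
  refine ⟨Sum.elim (fun _ => ({0} : Finset ℕ)) (fun i => (e i : Finset ℕ)), ?_, rfl, ?_, ?_, ?_, ?_, ?_⟩
  · -- injective
    intro u v huv
    cases u with
    | inl a =>
      cases v with
      | inl b => exact congrArg Sum.inl (Subsingleton.elim a b)
      | inr b =>
        exfalso
        have hb := (hmemT _).1 (e b).2
        exact hb.2.2 (by simpa using huv.symm)
    | inr a =>
      cases v with
      | inl b =>
        exfalso
        have ha := (hmemT _).1 (e a).2
        exact ha.2.2 (by simpa using huv)
      | inr b =>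
        simp only [Sum.elim_inr] at huv
        exact congrArg Sum.inr (e.injective (Subtype.ext huv))
  · -- range
    ext A
    constructor
    · rintro ⟨u, rfl⟩
      cases u with
      | inl a => exact ⟨Finset.singleton_subset_iff.2 h0, Finset.singleton_nonempty 0⟩
      | inr i =>
        have h := (hmemT _).1 (e i).2
        exact ⟨h.1, Finset.nonempty_iff_ne_empty.2 h.2.1⟩
    · rintro ⟨hAX, hAne⟩
      by_cases hA0 : A = {0}
      · exact ⟨Sum.inl 0, hA0.symm⟩
      · refine ⟨Sum.inr (e.symm ⟨A, (hmemT A).2 ⟨hAX, Finset.nonempty_iff_ne_empty.1 hAne, hA0⟩⟩), ?_⟩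
        simp
  · -- edge sums in X
    intro u v huv
    cases u with
    | inl a =>
      cases v with
      | inl b => simp [completeBipartiteGraph] at huv
      | inr i =>
        simp only [Sum.elim_inl, Sum.elim_inr, hz]
        exact ((hmemT _).1 (e i).2).1
    | inr i =>
      cases v with
      | inl b =>
        simp only [Sum.elim_inl, Sum.elim_inr, hz']
        exact ((hmemT _).1 (e i).2).1
      | inr j => simp [completeBipartiteGraph] at huv
  · -- topology
    have hmem : ∀ A : Finset ℕ,
        A ∈ (Set.range (Sum.elim (fun _ : Fin 1 => ({0} : Finset ℕ))
          (fun i : Fin (2 ^ X.card - 2) => (e i : Finset ℕ))) ∪ {∅}) ↔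
        (A ⊆ X ∧ A.Nonempty) ∨ A = ∅ := by
      intro A
      constructor
      · rintro (⟨u, rfl⟩ | h)
        · cases u with
          | inl a => exact Or.inl ⟨Finset.singleton_subset_iff.2 h0, Finset.singleton_nonempty 0⟩
          | inr i =>
            have h := (hmemT _).1 (e i).2
            exact Or.inl ⟨h.1, Finset.nonempty_iff_ne_empty.2 h.2.1⟩
        · exact Or.inr h
      · rintro (⟨hAX, hAne⟩ | rfl)
        · by_cases hA0 : A = {0}
          · exact Or.inl ⟨Sum.inl 0, hA0.symm⟩
          · refine Or.inl ⟨Sum.inr (e.symm ⟨A, (hmemT A).2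
              ⟨hAX, Finset.nonempty_iff_ne_empty.1 hAne, hA0⟩⟩), ?_⟩
            simp
        · exact Or.inr rfl
    refine ⟨(hmem ∅).2 (Or.inr rfl), (hmem X).2 (Or.inl ⟨le_refl _, ⟨0, h0⟩⟩), ?_, ?_, ?_⟩
    · intro A hA
      rcases (hmem A).1 hA with ⟨h1, _⟩ | rfl
      · exact h1
      · exact Finset.empty_subset X
    · intro A hA B hB
      rcases (hmem A).1 hA with ⟨h1, h2⟩ | rfl
      · rcases (hmem B).1 hB with ⟨h3, _⟩ | rfl
        · exact (hmem _).2 (Or.inl ⟨Finset.union_subset h1 h3, h2.mono Finset.subset_union_left⟩)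
        · simpa using (hmem _).2 (Or.inl ⟨h1, h2⟩)
      · simpa using hB
    · intro A hA B hB
      rcases (hmem A).1 hA with ⟨h1, _⟩ | rfl
      · by_cases hAB : (A ∩ B).Nonempty
        · exact (hmem _).2 (Or.inl ⟨(Finset.inter_subset_left).trans h1, hAB⟩)
        · rw [Finset.not_nonempty_iff_eq_empty] at hAB
          exact (hmem _).2 (Or.inr hAB)
      · simpa using hA
  · -- edge sumsets set
    ext A
    simp only [Set.mem_setOf_eq]
    constructor
    · rintro ⟨u, v, huv, rfl⟩
      have key : ∀ i : Fin (2 ^ X.card - 2),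
          ((e i : Finset ℕ) ⊆ X ∧ (e i : Finset ℕ).Nonempty ∧ (e i : Finset ℕ) ≠ {0}) := by
        intro i
        have h := (hmemT _).1 (e i).2
        exact ⟨h.1, Finset.nonempty_iff_ne_empty.2 h.2.1, h.2.2⟩
      cases u with
      | inl a =>
        cases v with
        | inl b => simp [completeBipartiteGraph] at huv
        | inr i => simpa [hz] using key i
      | inr i =>
        cases v with
        | inl b => simpa [hz'] using key i
        | inr j => simp [completeBipartiteGraph] at huv
    · rintro ⟨hAX, hAne, hA0⟩
      refine ⟨Sum.inl 0, Sum.inr (e.symm ⟨A, (hmemT A).2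
        ⟨hAX, Finset.nonempty_iff_ne_empty.1 hAne, hA0⟩⟩), by simp [completeBipartiteGraph], ?_⟩
      simp [hz]
  · -- final union
    ext A
    simp only [Set.mem_union, Set.mem_setOf_eq, Set.mem_range]
    constructor
    · rintro (⟨u, rfl⟩ | ⟨u, v, huv, rfl⟩)
      · cases u with
        | inl a => exact ⟨Finset.singleton_subset_iff.2 h0, Finset.singleton_nonempty 0⟩
        | inr i =>
          have h := (hmemT _).1 (e i).2
          exact ⟨h.1, Finset.nonempty_iff_ne_empty.2 h.2.1⟩
      · cases u with
        | inl a =>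
          cases v with
          | inl b => simp [completeBipartiteGraph] at huv
          | inr i =>
            have h := (hmemT _).1 (e i).2
            simpa [hz] using And.intro h.1 (Finset.nonempty_iff_ne_empty.2 h.2.1)
        | inr i =>
          cases v with
          | inl b =>
            have h := (hmemT _).1 (e i).2
            simpa [hz'] using And.intro h.1 (Finset.nonempty_iff_ne_empty.2 h.2.1)
          | inr j => simp [completeBipartiteGraph] at huv
    · rintro ⟨hAX, hAne⟩
      by_cases hA0 : A = {0}
      · exact Or.inl ⟨Sum.inl 0, hA0.symm⟩
      · refine Or.inl ⟨Sum.inr (e.symm ⟨A, (hmemT A).2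
          ⟨hAX, Finset.nonempty_iff_ne_empty.1 hAne, hA0⟩⟩), ?_⟩
        simp
end

section
/- Let X ⊆ ℕ be finite with 0 ∈ X, and let G be a graph admitting a TIASSL f with respect to X. Let 𝒜 be the family of nonempty subsets of X that are not expressible as a sumset A + B with A, B ⊆ X both different from {0}. Then every element of 𝒜 is the set-label of some vertex of G; consequently |V(G)| ≥ |𝒜| if X ∈ 𝒜, and |V(G)| ≥ |𝒜| + 1 if X ∉ 𝒜. -/
open Pointwise

/-- The set-labels induced on edges: sumsets of the labels of adjacent vertices. -/
def edgeLabels {V : Type*} (G : SimpleGraph V) (f : V → Finset ℕ) : Set (Finset ℕ) :=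
  {A : Finset ℕ | ∃ u v, G.Adj u v ∧ A = f u + f v}

/-- `f` is a topological integer additive set-sequential labeling (TIASSL) of `G`
with respect to the ground set `X`. -/
def IsTIASSL {V : Type*} (G : SimpleGraph V) (f : V → Finset ℕ) (X : Finset ℕ) : Prop :=
  Function.Injective f ∧ (∀ v, (f v).Nonempty) ∧ (∀ v, f v ⊆ X) ∧
    (∀ u v, G.Adj u v → f u + f v ⊆ X) ∧
    IsTopologyOn (Set.range f ∪ {∅}) X ∧
    Set.range f ∪ edgeLabels G f = {A : Finset ℕ | A ⊆ X ∧ A.Nonempty}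

/-- The nonempty subsets of `X` that are not non-trivial sumsets of two subsets of `X`. -/
def notSumsets (X : Finset ℕ) : Set (Finset ℕ) :=
  {A : Finset ℕ | A ⊆ X ∧ A.Nonempty ∧
    ¬ ∃ B C : Finset ℕ, B ⊆ X ∧ C ⊆ X ∧ B ≠ {0} ∧ C ≠ {0} ∧ A = B + C}

/-- The nonempty subsets of `X` that are not non-trivial summands of any subset of `X`. -/
def notSummands (X : Finset ℕ) : Set (Finset ℕ) :=
  {B : Finset ℕ | B ⊆ X ∧ B.Nonempty ∧
    ¬ ∃ C D : Finset ℕ, C ⊆ X ∧ D ⊆ X ∧ D.Nonempty ∧ D ≠ {0} ∧ C = B + D}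

theorem tiassl_vertex_count {V : Type*} [Fintype V]
    (G : SimpleGraph V) (X : Finset ℕ) (h0 : (0 : ℕ) ∈ X)
    (f : V → Finset ℕ) (hf : IsTIASSL G f X) :
    (∀ A ∈ notSumsets X, ∃ v, f v = A) ∧
    (X ∈ notSumsets X → (notSumsets X).ncard ≤ Fintype.card V) ∧
    (X ∉ notSumsets X → (notSumsets X).ncard + 1 ≤ Fintype.card V) := by
  obtain ⟨hinj, hne, hsub, hedge, htop, hcover⟩ := hf
  have hmain : ∀ A ∈ notSumsets X, ∃ v, f v = A := by
    intro A hA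
    obtain ⟨hAX, hAne, hns⟩ := hA
    have hmem : A ∈ Set.range f ∪ edgeLabels G f := by
      rw [hcover]; exact ⟨hAX, hAne⟩
    rcases hmem with h | h
    · exact h
    · obtain ⟨u, v, huv, hA'⟩ := h
      by_cases hu : f u = {0}
      · refine ⟨v, ?_⟩
        rw [hA', hu]
        simp [Finset.singleton_zero]
      · by_cases hv : f v = {0}
        · refine ⟨u, ?_⟩
          rw [hA', hv]
          simp [Finset.singleton_zero]
        · exact absurd ⟨f u, f v, hsub u, hsub v, hu, hv, hA'⟩ hns
  have hrange_fin : (Set.range f).Finite := Set.finite_range f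
  have hrange_card : (Set.range f).ncard ≤ Fintype.card V := by
    calc (Set.range f).ncard ≤ (Set.univ : Set V).ncard := by
          rw [← Set.ncard_image_of_injective Set.univ hinj, Set.image_univ]
        _ = Fintype.card V := by rw [Set.ncard_univ, Nat.card_eq_fintype_card]
  have hsubset : notSumsets X ⊆ Set.range f := by
    intro A hA; exact hmain A hA
  refine ⟨hmain, fun _ => le_trans (Set.ncard_le_ncard hsubset hrange_fin) hrange_card, ?_⟩
  intro hX
  have hXne : X.Nonempty := ⟨0, h0⟩
  have hXr : X ∈ Set.range f := by
    rcases htop.2.1 with h | h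
    · exact h
    · exact absurd (Set.eq_of_mem_singleton h) (Finset.nonempty_iff_ne_empty.mp hXne)
  have hins : insert X (notSumsets X) ⊆ Set.range f := by
    intro A hA
    rcases hA with rfl | hA
    · exact hXr
    · exact hsubset hA
  have : (insert X (notSumsets X)).ncard ≤ Fintype.card V :=
    le_trans (Set.ncard_le_ncard hins hrange_fin) hrange_card
  rw [Set.ncard_insert_of_notMem hX (hrange_fin.subset hsubset)] at this; omega
end

section
/- Let X ⊆ ℕ be finite with 0 ∈ X and let G admit a TIASSL f with respect to X. Let ℬ be the family of nonempty subsets B of X such that B is not a non-trivial summand of any subset of X (i.e., there is no C ⊆ X and nonempty D ⊆ X with D ≠ {0} and C = B + D). Then every vertex of G whose set-label lies in ℬ has all its neighbors labeled {0}; in particular the vertex labeled {0} has degree at least the number of elements of ℬ that occur as labels of non-isolated vertices. -/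
open Pointwise

theorem tiassl_notSummand_neighbors_zero {V : Type*} [Fintype V] [DecidableEq V]
    (G : SimpleGraph V) [DecidableRel G.Adj]
    (X : Finset ℕ) (h0 : (0 : ℕ) ∈ X)
    (f : V → Finset ℕ) (hf : IsTIASSL G f X) :
    (∀ v, f v ∈ notSummands X → ∀ u, G.Adj v u → f u = {0}) ∧
    (∀ v₀, f v₀ = {0} →
      {B ∈ notSummands X | ∃ v, f v = B ∧ ∃ u, G.Adj v u}.ncard ≤ G.degree v₀) := by

  obtain ⟨hinj, hne, hsub, hedge, htop, hcover⟩ := hf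
  have key : ∀ v, f v ∈ notSummands X → ∀ u, G.Adj v u → f u = {0} := by
    intro v hv u hadj
    by_contra hne0
    exact hv.2.2 ⟨f v + f u, f u, hedge v u hadj, hsub u, hne u, hne0, rfl⟩
  refine ⟨key, ?_⟩
  intro v₀ hv₀
  have hsubset : {B ∈ notSummands X | ∃ v, f v = B ∧ ∃ u, G.Adj v u} ⊆
      f '' (G.neighborSet v₀) := by
    rintro B ⟨hB, v, hfv, u, hadj⟩
    have hu : f u = {0} := key v (hfv ▸ hB) u hadj
    have : u = v₀ := hinj (hu.trans hv₀.symm)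
    exact ⟨v, by simpa [SimpleGraph.neighborSet] using (this ▸ hadj).symm, hfv⟩
  calc {B ∈ notSummands X | ∃ v, f v = B ∧ ∃ u, G.Adj v u}.ncard
      ≤ (f '' (G.neighborSet v₀)).ncard :=
        Set.ncard_le_ncard hsubset ((G.neighborSet v₀).toFinite.image f)
    _ ≤ (G.neighborSet v₀).ncard := Set.ncard_image_le (G.neighborSet v₀).toFinite
    _ = G.degree v₀ := by
        rw [SimpleGraph.degree, ← Set.ncard_coe_finset, SimpleGraph.neighborFinset_def, Set.coe_toFinset]
end

section
/- No connected graph on at least 2 vertices admits a topological integer additive set-sequential indexer (TIASSI); i.e., if f is a TIASSL of a connected graph G with |V(G)| ≥ 2, then the combined labeling f* on V(G) ∪ E(G) (f on vertices, f⁺ on edges) is not injective. -/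
open Pointwise

/-- The induced labeling on unordered pairs of adjacent vertices. -/
def edgeLabel {V : Type*} (f : V → Finset ℕ) : Sym2 V → Finset ℕ :=
  Sym2.lift ⟨fun u v => f u + f v, fun u v => add_comm (f u) (f v)⟩

/-- No connected graph on at least two vertices admits a TIASSI: the combined
labeling (`f` on vertices, `f⁺` on edges) is never injective. -/
theorem no_connected_tiassi {V : Type*} [Fintype V]
    (G : SimpleGraph V) (hconn : G.Connected) (hcard : 2 ≤ Fintype.card V)
    (X : Finset ℕ) (h0 : (0 : ℕ) ∈ X)
    (f : V → Finset ℕ) (hf : IsTIASSL G f X) :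
    ¬ Function.Injective
        (Sum.elim f (fun e : G.edgeSet => edgeLabel f e.1) :
          V ⊕ G.edgeSet → Finset ℕ) := by
  obtain ⟨hinj, hne, hsub, hsum, htop, hall⟩ := hf
  -- X is in the range of f
  have hXne : X.Nonempty := ⟨0, h0⟩
  have hXT : X ∈ Set.range f ∪ {∅} := htop.2.1
  have hXr : ∃ v, f v = X := by
    rcases hXT with h | h
    · exact h
    · exact absurd h (by simpa using hXne.ne_empty)
  obtain ⟨v, hv⟩ := hXr
  -- v has a neighbor u
  obtain ⟨w, hw⟩ := Fintype.exists_ne_of_one_lt_card hcard v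
  obtain ⟨p⟩ := hconn v w
  have hnil : ¬ p.Nil := by
    intro h
    exact hw (h.eq).symm
  set u := p.getVert 1 with hu
  have hadj : G.Adj v u := p.adj_snd hnil
  -- f u = {0}
  have hfu : f u = {0} := by
    have hsub' : ∀ a ∈ f u, a = 0 := by
      intro a ha
      by_contra hne0
      have hm : a + X.max' hXne ∈ X := by
        apply hsum u v hadj.symm
        exact Finset.add_mem_add ha (by rw [hv]; exact X.max'_mem hXne)
      have := X.le_max' _ hm
      omega
    obtain ⟨a, ha⟩ := hne u
    have h0u : (0 : ℕ) ∈ f u := by rw [← hsub' a ha]; exact ha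
    ext x
    simp only [Finset.mem_singleton]
    constructor
    · exact hsub' x
    · rintro rfl; exact h0u
  -- the edge label of uv equals X = f v
  have hedge : edgeLabel f s(v, u) = X := by
    have : f v + f u = X := by
      rw [hv, hfu, Finset.add_singleton]
      simp
    simpa [edgeLabel] using this
  intro hI
  have he : s(v, u) ∈ G.edgeSet := hadj
  have := hI (a₁ := Sum.inl v) (a₂ := Sum.inr ⟨s(v, u), he⟩) (by simp [hv, hedge])
  simp at this
end

section
/- Let X ⊆ ℕ be finite with 0 ∈ X, and suppose G admits a TIASSL f with respect to X. Let 𝒟 be the set of nonempty subsets of X that are neither non-trivial sumsets of two subsets of X nor non-trivial summands of any subset of X. Then every vertex of G whose label lies in 𝒟 \ {{0}} is a pendant vertex of G (adjacent only to the vertex labeled {0}). -/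
open Pointwise

theorem tiassl_neither_sumset_nor_summand_pendant {V : Type*} [Fintype V] [DecidableEq V]
    (G : SimpleGraph V) [DecidableRel G.Adj] (hconn : G.Connected)
    (X : Finset ℕ) (h0 : (0 : ℕ) ∈ X)
    (f : V → Finset ℕ) (hf : IsTIASSL G f X) :
    ∀ v, f v ∈ notSumsets X ∩ notSummands X → f v ≠ {0} →
      G.degree v = 1 ∧ ∀ u, G.Adj v u → f u = {0} := by
  intro v hv hne
  obtain ⟨hinj, hnonempty, hsub, hedge, htop, hcover⟩ := hf
  have hsummand := hv.2
  -- every neighbor has label {0}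
  have hzero : ∀ u, G.Adj v u → f u = {0} := by
    intro u hadj
    by_contra hne0
    exact hsummand.2.2 ⟨f v + f u, f u, hedge v u hadj, hsub u, hnonempty u, hne0, rfl⟩
  refine ⟨?_, hzero⟩
  -- v has a neighbor
  have hexadj : ∃ u, G.Adj v u := by
    by_cases hall : ∀ w : V, w = v
    · -- only one vertex: contradiction with f v ≠ {0}
      exfalso
      have h0mem : ({0} : Finset ℕ) ∈ Set.range f ∪ edgeLabels G f := by
        rw [hcover]
        exact ⟨Finset.singleton_subset_iff.2 h0, Finset.singleton_nonempty 0⟩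
      rcases h0mem with ⟨w, hw⟩ | ⟨a, b, hab, _⟩
      · exact hne (by rw [← hw, hall w])
      · exact G.irrefl (by rwa [hall a, hall b] at hab)
    · push_neg at hall
      obtain ⟨w, hw⟩ := hall
      have hreach := (hconn v w)
      obtain ⟨p⟩ := hreach
      cases p with
      | nil => exact absurd rfl (Ne.symm hw)
      | cons h _ => exact ⟨_, h⟩
  obtain ⟨u, hu⟩ := hexadj
  have : G.neighborFinset v = {u} := by
    apply Finset.eq_singleton_iff_unique_mem.2
    refine ⟨(G.mem_neighborFinset v u).2 hu, ?_⟩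
    intro x hx
    apply hinj
    rw [hzero x ((G.mem_neighborFinset v x).1 hx), hzero u hu]
  rw [SimpleGraph.degree, this, Finset.card_singleton]
end
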